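/- Let E be a real inner product space, β > 0, K ≥ 1, T ≥ 1, and let n range over {1,…,N} with weights ξ_n ≥ 0, Σ_n ξ_n = 1. Let F, F_n : E → ℝ be differentiable with ∇F_n Lipschitz with constant L_n > 0, ∇F(x) = Σ_n ξ_n ∇F_n(x) for all x, and ∇F Lipschitz with constant L > 0. Define, for t = 0,…,T−1, local trajectories w̃_n^{0,t} = w̃^t, w̃_n^{k+1,t} = w̃_n^{k,t} − β ∇F_n(w̃_n^{k,t}), and global updates w̃^{t+1} = w̃^t − β Σ_n ξ_n Σ_{k=0}^{K−1} ∇F_n(w̃_n^{k,t}). Then (1/T) Σ_{t=0}^{T−1} ‖∇F(w̃^t)‖² ≤ (2/(K β T)) (F(w̃^0) − F(w̃^T)) + (L β N / T) Σ_{t=0}^{T−1} Σ_{n=1}^{N} Σ_{k=0}^{K−1} ξ_n² ‖∇F_n(w̃_n^{k,t})‖² + (N β² / (K T)) Σ_{t=0}^{T−1} Σ_{n=1}^{N} Σ_{k=0}^{K−1} ξ_n² L_n² k Σ_{j=0}^{k−1} ‖∇F_n(w̃_n^{j,t})‖². (This is the deterministic form of Theorem 4 of the paper, the non-convex FL convergence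 bound for the DDSRA algorithm.) -/

import Mathlib

open Finset

lemma norm_sum_sq_le_card_mul {ι : Type*} {E : Type*} [NormedAddCommGroup E]
    [InnerProductSpace ℝ E] (s : Finset ι) (v : ι → E) :
    ‖∑ i ∈ s, v i‖ ^ 2 ≤ (s.card : ℝ) * ∑ i ∈ s, ‖v i‖ ^ 2 := by
  calc ‖∑ i ∈ s, v i‖ ^ 2 ≤ (∑ i ∈ s, ‖v i‖) ^ 2 := by
        have h := norm_sum_le s v
        have : (0:ℝ) ≤ ‖∑ i ∈ s, v i‖ := norm_nonneg _
        nlinarith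
    _ ≤ (s.card : ℝ) * ∑ i ∈ s, ‖v i‖ ^ 2 := sq_sum_le_card_mul_sum_sq

lemma descent_lemma {E : Type*} [NormedAddCommGroup E] [InnerProductSpace ℝ E]
    [CompleteSpace E] (F : E → ℝ) (hF : Differentiable ℝ F) (L : ℝ) (hL : 0 ≤ L)
    (hLip : ∀ x y, ‖gradient F x - gradient F y‖ ≤ L * ‖x - y‖) (x y : E) :
    F y ≤ F x + inner ℝ (gradient F x) (y - x) + L / 2 * ‖y - x‖ ^ 2 := by
  set v := y - x with hv
  have hgc : Continuous (gradient F) := by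
    rw [Metric.continuous_iff]
    intro b ε hε
    refine ⟨ε / (L + 1), by positivity, fun a ha => ?_⟩
    rw [dist_eq_norm]
    calc ‖gradient F a - gradient F b‖ ≤ L * ‖a - b‖ := hLip a b
      _ ≤ (L + 1) * ‖a - b‖ := by nlinarith [norm_nonneg (a - b)]
      _ < (L + 1) * (ε / (L + 1)) := by
          have : ‖a - b‖ < ε / (L + 1) := by rwa [← dist_eq_norm]
          exact mul_lt_mul_of_pos_left this (by positivity)
      _ = ε := by field_simp
  have key : ∀ s : ℝ, HasDerivAt (fun s : ℝ => F (x + s • v))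
      (inner ℝ (gradient F (x + s • v)) v) s := by
    intro s
    have h1 := (hF (x + s • v)).hasGradientAt.hasFDerivAt
    have h2 : HasDerivAt (fun s : ℝ => x + s • v) v s := by
      simpa using ((hasDerivAt_id s).smul_const v).const_add x
    have h3 := h1.comp_hasDerivAt s h2
    exact h3
  have hcont : Continuous fun s : ℝ => (inner ℝ (gradient F (x + s • v)) v : ℝ) :=
    (hgc.comp (by continuity)).inner continuous_const
  have heq : F y - F x = ∫ s in (0:ℝ)..1, (inner ℝ (gradient F (x + s • v)) v : ℝ) := by
    rw [intervalIntegral.integral_eq_sub_of_hasDerivAt (fun s _ => key s)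
      (hcont.intervalIntegrable 0 1)]
    simp [hv]
  have hbound : ∫ s in (0:ℝ)..1, (inner ℝ (gradient F (x + s • v)) v : ℝ) ≤
      ∫ s in (0:ℝ)..1, ((inner ℝ (gradient F x) v : ℝ) + L * ‖v‖ ^ 2 * s) := by
    apply intervalIntegral.integral_mono_on zero_le_one (hcont.intervalIntegrable 0 1)
      ((continuous_const.add (continuous_const.mul continuous_id)).intervalIntegrable 0 1)
    intro s hs
    have h4 : (inner ℝ (gradient F (x + s • v)) v : ℝ) - inner ℝ (gradient F x) v
        = inner ℝ (gradient F (x + s • v) - gradient F x) v := by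
      rw [inner_sub_left]
    have h5 : (inner ℝ (gradient F (x + s • v) - gradient F x) v : ℝ) ≤
        ‖gradient F (x + s • v) - gradient F x‖ * ‖v‖ := real_inner_le_norm _ _
    have h6 : ‖gradient F (x + s • v) - gradient F x‖ ≤ L * (s * ‖v‖) := by
      have := hLip (x + s • v) x
      simpa [norm_smul, abs_of_nonneg hs.1] using this
    have h7 : ‖gradient F (x + s • v) - gradient F x‖ * ‖v‖ ≤ L * (s * ‖v‖) * ‖v‖ :=
      mul_le_mul_of_nonneg_right h6 (norm_nonneg _)
    simp only [Pi.add_apply, Pi.mul_apply, id_eq]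
    nlinarith [norm_nonneg v]
  have hval : ∫ s in (0:ℝ)..1, ((inner ℝ (gradient F x) v : ℝ) + L * ‖v‖ ^ 2 * s)
      = inner ℝ (gradient F x) v + L / 2 * ‖v‖ ^ 2 := by
    rw [intervalIntegral.integral_add (intervalIntegrable_const)
      ((intervalIntegral.intervalIntegrable_id.const_mul _))]
    rw [intervalIntegral.integral_const_mul, integral_id]
    simp
    ring
  linarith [heq, hbound.trans_eq hval]

/-- Deterministic form of Theorem 4: non-convex FL convergence bound for the DDSRA algorithm. -/
theorem nonconvex_fl_convergence_bound
    {E : Type*} [NormedAddCommGroup E] [InnerProductSpace ℝ E] [CompleteSpace E]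
    (β : ℝ) (hβ : 0 < β) (K T : ℕ) (hK : 1 ≤ K) (hT : 1 ≤ T)
    (N : ℕ) (ξ : Fin N → ℝ) (hξ : ∀ n, 0 ≤ ξ n) (hξsum : ∑ n, ξ n = 1)
    (Ln : Fin N → ℝ) (hLn : ∀ n, 0 < Ln n) (L : ℝ) (hL : 0 < L)
    (F : E → ℝ) (Fn : Fin N → E → ℝ)
    (hF : Differentiable ℝ F) (hFn : ∀ n, Differentiable ℝ (Fn n))
    (hLipn : ∀ n x y, ‖gradient (Fn n) x - gradient (Fn n) y‖ ≤ Ln n * ‖x - y‖)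
    (hgrad : ∀ x, gradient F x = ∑ n, ξ n • gradient (Fn n) x)
    (hLip : ∀ x y, ‖gradient F x - gradient F y‖ ≤ L * ‖x - y‖)
    (wg : ℕ → E) (w : Fin N → ℕ → ℕ → E)
    (hw0 : ∀ n t, w n 0 t = wg t)
    (hw : ∀ n k t, w n (k + 1) t = w n k t - β • gradient (Fn n) (w n k t))
    (hg : ∀ t, wg (t + 1) =
      wg t - β • ∑ n, ξ n • ∑ k ∈ Finset.range K, gradient (Fn n) (w n k t)) :
    (1 / (T : ℝ)) * ∑ t ∈ Finset.range T, ‖gradient F (wg t)‖ ^ 2 ≤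
      (2 / ((K : ℝ) * β * (T : ℝ))) * (F (wg 0) - F (wg T))
        + (L * β * N / (T : ℝ)) *
          (∑ t ∈ Finset.range T, ∑ n, ∑ k ∈ Finset.range K,
            (ξ n) ^ 2 * ‖gradient (Fn n) (w n k t)‖ ^ 2)
        + (N * β ^ 2 / ((K : ℝ) * (T : ℝ))) *
          (∑ t ∈ Finset.range T, ∑ n, ∑ k ∈ Finset.range K,
            (ξ n) ^ 2 * (Ln n) ^ 2 * (k : ℝ) *
              ∑ j ∈ Finset.range k, ‖gradient (Fn n) (w n j t)‖ ^ 2) := by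
  have hT' : (0:ℝ) < T := by exact_mod_cast hT
  have hK' : (0:ℝ) < K := by exact_mod_cast hK
  -- Step 1: explicit local iterates
  have hwk : ∀ n k t, w n k t = wg t - β • ∑ j ∈ Finset.range k, gradient (Fn n) (w n j t) := by
    intro n k t
    induction k with
    | zero => simp [hw0]
    | succ k ih =>
        rw [Finset.sum_range_succ, smul_add, ← sub_sub, ← ih]
        exact hw n k t
  -- Step 2: drift bound
  have hdrift : ∀ n k t, ‖gradient (Fn n) (wg t) - gradient (Fn n) (w n k t)‖ ^ 2 ≤
      (Ln n) ^ 2 * β ^ 2 * (k : ℝ) * ∑ j ∈ Finset.range k, ‖gradient (Fn n) (w n j t)‖ ^ 2 := by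
    intro n k t
    have h2 : wg t - w n k t = β • ∑ j ∈ Finset.range k, gradient (Fn n) (w n j t) := by
      rw [hwk n k t, sub_sub_cancel]
    have h1 : ‖gradient (Fn n) (wg t) - gradient (Fn n) (w n k t)‖ ≤
        Ln n * (β * ‖∑ j ∈ Finset.range k, gradient (Fn n) (w n j t)‖) := by
      calc ‖gradient (Fn n) (wg t) - gradient (Fn n) (w n k t)‖
          ≤ Ln n * ‖wg t - w n k t‖ := hLipn n _ _
        _ = Ln n * (β * ‖∑ j ∈ Finset.range k, gradient (Fn n) (w n j t)‖) := by
            rw [h2, norm_smul, Real.norm_eq_abs, abs_of_pos hβ]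
    have h3 : ‖∑ j ∈ Finset.range k, gradient (Fn n) (w n j t)‖ ^ 2 ≤
        (k : ℝ) * ∑ j ∈ Finset.range k, ‖gradient (Fn n) (w n j t)‖ ^ 2 := by
      simpa using norm_sum_sq_le_card_mul (Finset.range k) (fun j => gradient (Fn n) (w n j t))
    have h4 : ‖gradient (Fn n) (wg t) - gradient (Fn n) (w n k t)‖ ^ 2 ≤
        (Ln n * (β * ‖∑ j ∈ Finset.range k, gradient (Fn n) (w n j t)‖)) ^ 2 :=
      pow_le_pow_left₀ (norm_nonneg _) h1 2
    have h5 : (0:ℝ) ≤ (Ln n)^2 * β^2 := by positivity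
    nlinarith [mul_le_mul_of_nonneg_left h3 h5]
  -- Step 3: variance bound for each k, t
  have hvar : ∀ t k, ‖gradient F (wg t) - ∑ n, ξ n • gradient (Fn n) (w n k t)‖ ^ 2 ≤
      (N : ℝ) * β ^ 2 * ∑ n, (ξ n) ^ 2 * (Ln n) ^ 2 * (k : ℝ) *
        ∑ j ∈ Finset.range k, ‖gradient (Fn n) (w n j t)‖ ^ 2 := by
    intro t k
    have hdiff : gradient F (wg t) - ∑ n, ξ n • gradient (Fn n) (w n k t)
        = ∑ n, ξ n • (gradient (Fn n) (wg t) - gradient (Fn n) (w n k t)) := by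
      rw [hgrad, ← Finset.sum_sub_distrib]
      exact Finset.sum_congr rfl fun n _ => (smul_sub _ _ _).symm
    rw [hdiff]
    have h1 := norm_sum_sq_le_card_mul Finset.univ
      (fun n => ξ n • (gradient (Fn n) (wg t) - gradient (Fn n) (w n k t)))
    have h2 : ∀ n : Fin N, ‖ξ n • (gradient (Fn n) (wg t) - gradient (Fn n) (w n k t))‖ ^ 2
        = (ξ n) ^ 2 * ‖gradient (Fn n) (wg t) - gradient (Fn n) (w n k t)‖ ^ 2 := by
      intro n
      rw [norm_smul, Real.norm_eq_abs, mul_pow, sq_abs]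
    calc ‖∑ n, ξ n • (gradient (Fn n) (wg t) - gradient (Fn n) (w n k t))‖ ^ 2
        ≤ (N : ℝ) * ∑ n, (ξ n) ^ 2 *
            ‖gradient (Fn n) (wg t) - gradient (Fn n) (w n k t)‖ ^ 2 := by
          simpa [h2] using h1
      _ ≤ (N : ℝ) * ∑ n, (ξ n) ^ 2 * ((Ln n) ^ 2 * β ^ 2 * (k : ℝ) *
            ∑ j ∈ Finset.range k, ‖gradient (Fn n) (w n j t)‖ ^ 2) := by
          apply mul_le_mul_of_nonneg_left _ (by positivity)
          exact Finset.sum_le_sum fun n _ =>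
            mul_le_mul_of_nonneg_left (hdrift n k t) (by positivity)
      _ = (N : ℝ) * β ^ 2 * ∑ n, (ξ n) ^ 2 * (Ln n) ^ 2 * (k : ℝ) *
            ∑ j ∈ Finset.range k, ‖gradient (Fn n) (w n j t)‖ ^ 2 := by
          rw [Finset.mul_sum, Finset.mul_sum]
          exact Finset.sum_congr rfl fun n _ => by ring
  -- Step 4: bound on the global step norm
  have hDbound : ∀ t, ‖∑ n, ξ n • ∑ k ∈ Finset.range K, gradient (Fn n) (w n k t)‖ ^ 2 ≤
      (K : ℝ) * N * ∑ n, ∑ k ∈ Finset.range K,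
        (ξ n) ^ 2 * ‖gradient (Fn n) (w n k t)‖ ^ 2 := by
    intro t
    have hD : (∑ n, ξ n • ∑ k ∈ Finset.range K, gradient (Fn n) (w n k t))
        = ∑ p ∈ Finset.univ ×ˢ Finset.range K, ξ p.1 • gradient (Fn p.1) (w p.1 p.2 t) := by
      rw [Finset.sum_product]
      exact Finset.sum_congr rfl fun n _ => Finset.smul_sum
    rw [hD]
    have h1 := norm_sum_sq_le_card_mul (Finset.univ ×ˢ Finset.range K)
      (fun p : Fin N × ℕ => ξ p.1 • gradient (Fn p.1) (w p.1 p.2 t))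
    have h2 : (((Finset.univ : Finset (Fin N)) ×ˢ Finset.range K).card : ℝ) = (N : ℝ) * K := by
      rw [Finset.card_product]
      simp [mul_comm]
    rw [h2] at h1
    calc ‖∑ p ∈ Finset.univ ×ˢ Finset.range K, ξ p.1 • gradient (Fn p.1) (w p.1 p.2 t)‖ ^ 2
        ≤ (N : ℝ) * K * ∑ p ∈ Finset.univ ×ˢ Finset.range K,
            ‖ξ p.1 • gradient (Fn p.1) (w p.1 p.2 t)‖ ^ 2 := h1
      _ = (K : ℝ) * N * ∑ n, ∑ k ∈ Finset.range K,
            (ξ n) ^ 2 * ‖gradient (Fn n) (w n k t)‖ ^ 2 := by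
          rw [Finset.sum_product]
          rw [show ((N:ℝ) * K = (K:ℝ) * N) from mul_comm _ _]
          congr 1
          exact Finset.sum_congr rfl fun n _ => Finset.sum_congr rfl fun k _ => by
            rw [norm_smul, Real.norm_eq_abs, mul_pow, sq_abs]
  -- Step 5: per-round descent inequality
  have hround : ∀ t, (β * K / 2) * ‖gradient F (wg t)‖ ^ 2 ≤
      (F (wg t) - F (wg (t + 1)))
      + (L * β ^ 2 * K * N / 2) * (∑ n, ∑ k ∈ Finset.range K,
          (ξ n) ^ 2 * ‖gradient (Fn n) (w n k t)‖ ^ 2)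
      + (N * β ^ 3 / 2) * (∑ n, ∑ k ∈ Finset.range K,
          (ξ n) ^ 2 * (Ln n) ^ 2 * (k : ℝ) *
            ∑ j ∈ Finset.range k, ‖gradient (Fn n) (w n j t)‖ ^ 2) := by
    intro t
    have hdesc := descent_lemma F hF L hL.le hLip (wg t) (wg (t + 1))
    have hstep : wg (t + 1) - wg t
        = (-β) • (∑ n, ξ n • ∑ k ∈ Finset.range K, gradient (Fn n) (w n k t)) := by
      rw [hg t, neg_smul]
      abel
    have hswap : (∑ n, ξ n • ∑ k ∈ Finset.range K, gradient (Fn n) (w n k t))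
        = ∑ k ∈ Finset.range K, ∑ n, ξ n • gradient (Fn n) (w n k t) := by
      simp_rw [Finset.smul_sum]
      exact Finset.sum_comm
    have hnormstep : ‖wg (t + 1) - wg t‖ ^ 2
        = β ^ 2 * ‖∑ n, ξ n • ∑ k ∈ Finset.range K, gradient (Fn n) (w n k t)‖ ^ 2 := by
      rw [hstep, norm_smul, Real.norm_eq_abs, abs_neg, abs_of_pos hβ, mul_pow]
    have hinner : (inner ℝ (gradient F (wg t)) (wg (t + 1) - wg t) : ℝ)
        = -β * ∑ k ∈ Finset.range K,
            (inner ℝ (gradient F (wg t)) (∑ n, ξ n • gradient (Fn n) (w n k t)) : ℝ) := by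
      rw [hstep, real_inner_smul_right, hswap, inner_sum]
    have hik : ∀ k, (‖gradient F (wg t)‖ ^ 2
        - ‖gradient F (wg t) - ∑ n, ξ n • gradient (Fn n) (w n k t)‖ ^ 2) / 2
        ≤ (inner ℝ (gradient F (wg t)) (∑ n, ξ n • gradient (Fn n) (w n k t)) : ℝ) := by
      intro k
      have h := norm_sub_sq_real (gradient F (wg t)) (∑ n, ξ n • gradient (Fn n) (w n k t))
      have h0 : (0:ℝ) ≤ ‖∑ n, ξ n • gradient (Fn n) (w n k t)‖ ^ 2 := by positivity
      linarith
    have hsumik :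
        (K : ℝ) * ‖gradient F (wg t)‖ ^ 2 / 2
          - (∑ k ∈ Finset.range K,
              ‖gradient F (wg t) - ∑ n, ξ n • gradient (Fn n) (w n k t)‖ ^ 2) / 2
        ≤ ∑ k ∈ Finset.range K,
            (inner ℝ (gradient F (wg t)) (∑ n, ξ n • gradient (Fn n) (w n k t)) : ℝ) := by
      have h := Finset.sum_le_sum (s := Finset.range K) (fun k _ => hik k)
      have heq : ∑ k ∈ Finset.range K, ((‖gradient F (wg t)‖ ^ 2
          - ‖gradient F (wg t) - ∑ n, ξ n • gradient (Fn n) (w n k t)‖ ^ 2) / 2)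
          = (K : ℝ) * ‖gradient F (wg t)‖ ^ 2 / 2
            - (∑ k ∈ Finset.range K,
                ‖gradient F (wg t) - ∑ n, ξ n • gradient (Fn n) (w n k t)‖ ^ 2) / 2 := by
        rw [← Finset.sum_div, Finset.sum_sub_distrib, Finset.sum_const, Finset.card_range,
          nsmul_eq_mul]
        ring
      linarith [heq ▸ h]
    have hsum1 : ∑ k ∈ Finset.range K,
        ‖gradient F (wg t) - ∑ n, ξ n • gradient (Fn n) (w n k t)‖ ^ 2
        ≤ (N : ℝ) * β ^ 2 * ∑ n, ∑ k ∈ Finset.range K,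
            (ξ n) ^ 2 * (Ln n) ^ 2 * (k : ℝ) *
              ∑ j ∈ Finset.range k, ‖gradient (Fn n) (w n j t)‖ ^ 2 := by
      calc ∑ k ∈ Finset.range K,
            ‖gradient F (wg t) - ∑ n, ξ n • gradient (Fn n) (w n k t)‖ ^ 2
          ≤ ∑ k ∈ Finset.range K, ((N : ℝ) * β ^ 2 * ∑ n,
              (ξ n) ^ 2 * (Ln n) ^ 2 * (k : ℝ) *
                ∑ j ∈ Finset.range k, ‖gradient (Fn n) (w n j t)‖ ^ 2) :=
            Finset.sum_le_sum fun k _ => hvar t k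
        _ = (N : ℝ) * β ^ 2 * ∑ k ∈ Finset.range K, ∑ n,
              (ξ n) ^ 2 * (Ln n) ^ 2 * (k : ℝ) *
                ∑ j ∈ Finset.range k, ‖gradient (Fn n) (w n j t)‖ ^ 2 := by
            rw [← Finset.mul_sum]
        _ = (N : ℝ) * β ^ 2 * ∑ n, ∑ k ∈ Finset.range K,
              (ξ n) ^ 2 * (Ln n) ^ 2 * (k : ℝ) *
                ∑ j ∈ Finset.range k, ‖gradient (Fn n) (w n j t)‖ ^ 2 := by
            rw [Finset.sum_comm]
    have hA := hDbound t
    -- combine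
    rw [hinner, hnormstep] at hdesc
    have hc1 : (0:ℝ) ≤ L / 2 * β ^ 2 := by positivity
    have h1 := mul_le_mul_of_nonneg_left hA hc1
    have hc2 : (0:ℝ) ≤ β / 2 := by positivity
    have h2 := mul_le_mul_of_nonneg_left hsum1 hc2
    have h3 := mul_le_mul_of_nonneg_left hsumik hβ.le
    nlinarith [h1, h2, h3, hdesc]
  -- Step 6: sum over rounds and conclude
  have htot : (β * K / 2) * ∑ t ∈ Finset.range T, ‖gradient F (wg t)‖ ^ 2 ≤
      (F (wg 0) - F (wg T))
      + (L * β ^ 2 * K * N / 2) * (∑ t ∈ Finset.range T, ∑ n, ∑ k ∈ Finset.range K,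
          (ξ n) ^ 2 * ‖gradient (Fn n) (w n k t)‖ ^ 2)
      + (N * β ^ 3 / 2) * (∑ t ∈ Finset.range T, ∑ n, ∑ k ∈ Finset.range K,
          (ξ n) ^ 2 * (Ln n) ^ 2 * (k : ℝ) *
            ∑ j ∈ Finset.range k, ‖gradient (Fn n) (w n j t)‖ ^ 2) := by
    have h := Finset.sum_le_sum (fun t (_ : t ∈ Finset.range T) => hround t)
    rw [Finset.mul_sum]
    calc ∑ t ∈ Finset.range T, (β * K / 2) * ‖gradient F (wg t)‖ ^ 2
        ≤ ∑ t ∈ Finset.range T, ((F (wg t) - F (wg (t + 1)))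
          + (L * β ^ 2 * K * N / 2) * (∑ n, ∑ k ∈ Finset.range K,
              (ξ n) ^ 2 * ‖gradient (Fn n) (w n k t)‖ ^ 2)
          + (N * β ^ 3 / 2) * (∑ n, ∑ k ∈ Finset.range K,
              (ξ n) ^ 2 * (Ln n) ^ 2 * (k : ℝ) *
                ∑ j ∈ Finset.range k, ‖gradient (Fn n) (w n j t)‖ ^ 2)) := h
      _ = _ := by
          rw [Finset.sum_add_distrib, Finset.sum_add_distrib, Finset.sum_range_sub',
            ← Finset.mul_sum, ← Finset.mul_sum]
  have hKne : (K : ℝ) ≠ 0 := ne_of_gt hK'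
  have hTne : (T : ℝ) ≠ 0 := ne_of_gt hT'
  have hβne : β ≠ 0 := ne_of_gt hβ
  have hc : (0:ℝ) ≤ 2 / ((K : ℝ) * β * (T : ℝ)) := by positivity
  have hfin := mul_le_mul_of_nonneg_left htot hc
  calc (1 / (T : ℝ)) * ∑ t ∈ Finset.range T, ‖gradient F (wg t)‖ ^ 2
      = (2 / ((K : ℝ) * β * (T : ℝ))) *
          ((β * K / 2) * ∑ t ∈ Finset.range T, ‖gradient F (wg t)‖ ^ 2) := by
        field_simp
    _ ≤ _ := hfin
    _ = _ := by
        field_simp
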